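/- arXiv:1504.07328 — 4 statements merged into one kernel-verified Lean document; each statement's English description precedes it below -/
import Mathlib

section
/- In the preferential attachment model, the process M_{n+1} := (N_{n+1}(1) − ν_{n+1}) / ∏_{j=1}^n w_j, n ≥ 1, is a martingale with respect to the filtration (F_{n+1}), where ν_n = E(N_n(1)), γ = (1+δ)/(2+δ), and w_j = j/(j+γ). -/
open MeasureTheory ProbabilityTheory Filter Finset

/-- The undirected preferential attachment model with parameter `δ > -1`.
`C n` is the node that node `n+1` attaches to (`0` meaning a self-loop),
`D n v` is the degree of node `v` in the graph `G n`, and `F` is the filtration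
generated by the evolution of the graph. -/
structure PAModel {Ω : Type} (mΩ : MeasurableSpace Ω) (μ : Measure Ω) (δ : ℝ) : Type where
  F : Filtration ℕ mΩ
  C : ℕ → Ω → ℕ
  D : ℕ → ℕ → Ω → ℕ
  C_le : ∀ n ω, 1 ≤ n → C n ω ≤ n
  C_meas : ∀ n, Measurable[F (n + 1)] (C n)
  D_one_one : ∀ ω, D 1 1 ω = 2
  D_one_ne : ∀ v ω, v ≠ 1 → D 1 v ω = 0
  D_meas : ∀ n v, Measurable[F n] (D n v)
  D_succ_old : ∀ n v ω, 1 ≤ v → v ≤ n →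
    D (n + 1) v ω = D n v ω + if C n ω = v then 1 else 0
  D_succ_new : ∀ n ω, 1 ≤ n → D (n + 1) (n + 1) ω = if C n ω = 0 then 2 else 1
  D_succ_out : ∀ n v ω, n + 1 < v → D (n + 1) v ω = 0
  attach_prob : ∀ n v, 1 ≤ v → v ≤ n →
    μ[Set.indicator {ω | C n ω = v} (fun _ => (1 : ℝ)) | F n]
      =ᵐ[μ] fun ω => ((D n v ω : ℝ) + δ) / (n * (2 + δ) + (1 + δ))
  self_prob : ∀ n, 1 ≤ n →
    μ[Set.indicator {ω | C n ω = 0} (fun _ => (1 : ℝ)) | F n]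
      =ᵐ[μ] fun _ => (1 + δ) / (n * (2 + δ) + (1 + δ))

namespace PAModel

variable {Ω : Type} {mΩ : MeasurableSpace Ω} {μ : Measure Ω} {δ : ℝ}

/-- `N n k` is the number of nodes of degree `k` in the graph `G n`. -/
noncomputable def N (M : PAModel mΩ μ δ) (n k : ℕ) (ω : Ω) : ℝ :=
  ((Finset.Icc 1 n).filter (fun v => M.D n v ω = k)).card

end PAModel

namespace PAModel

variable {Ω : Type} {mΩ : MeasurableSpace Ω} {μ : Measure Ω} {δ : ℝ}

/-- auxiliary: integrability from a uniform bound on a finite measure space -/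
lemma aux_integrable_of_bound [IsFiniteMeasure μ] {f : Ω → ℝ}
    (hf : AEStronglyMeasurable f μ) (c : ℝ) (h : ∀ ω, |f ω| ≤ c) : Integrable f μ :=
  (integrable_const c).mono' hf (Filter.Eventually.of_forall fun ω => by
    simpa [Real.norm_eq_abs] using h ω)

variable (M : PAModel mΩ μ δ)

lemma D_pos : ∀ n v ω, 1 ≤ v → v ≤ n → 1 ≤ M.D n v ω := by
  intro n
  induction n with
  | zero => intro v ω h1 h2; omega
  | succ n ih =>
    intro v ω h1 h2
    rcases Nat.lt_or_ge n 1 with hn | hn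
    · interval_cases n
      interval_cases v
      rw [M.D_one_one]; omega
    · rcases Nat.lt_succ_iff_lt_or_eq.mp (Nat.lt_succ_of_le h2) with hv | hv
      · have hv' : v ≤ n := by omega
        rw [M.D_succ_old n v ω h1 hv']
        have := ih v ω h1 hv'
        omega
      · subst hv
        rw [M.D_succ_new n ω hn]
        split <;> omega

lemma N_eq_sum (n k : ℕ) (ω : Ω) :
    M.N n k ω = ∑ v ∈ Finset.Icc 1 n, if M.D n v ω = k then (1 : ℝ) else 0 := by
  rw [PAModel.N, Finset.card_filter]
  push_cast
  rfl

lemma N_meas (n k : ℕ) : Measurable[M.F n] (M.N n k) := by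
  have : M.N n k = fun ω => ∑ v ∈ Finset.Icc 1 n, if M.D n v ω = k then (1 : ℝ) else 0 :=
    funext fun ω => M.N_eq_sum n k ω
  rw [this]
  exact Finset.measurable_sum _ fun v _ =>
    Measurable.ite (M.D_meas n v (measurableSet_singleton k)) measurable_const measurable_const

lemma N_bound (n k : ℕ) (ω : Ω) : |M.N n k ω| ≤ n := by
  rw [PAModel.N, abs_of_nonneg (Nat.cast_nonneg _)]
  have := Finset.card_filter_le (Finset.Icc 1 n) (fun v => M.D n v ω = k)
  have h2 : (Finset.Icc 1 n).card = n := by simp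
  exact_mod_cast h2 ▸ this

lemma N_integrable [IsFiniteMeasure μ] (n k : ℕ) : Integrable (M.N n k) μ :=
  aux_integrable_of_bound (((M.N_meas n k).mono (M.F.le n) le_rfl).aestronglyMeasurable)
    n (M.N_bound n k)

lemma N_succ_eq (n : ℕ) (hn : 1 ≤ n) (ω : Ω) :
    M.N (n + 1) 1 ω =
      M.N n 1 ω
        - (∑ v ∈ Finset.Icc 1 n, (if M.D n v ω = 1 then (1 : ℝ) else 0)
            * Set.indicator {ω' | M.C n ω' = v} (fun _ => (1 : ℝ)) ω)
        + (1 - Set.indicator {ω' | M.C n ω' = 0} (fun _ => (1 : ℝ)) ω) := by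
  rw [M.N_eq_sum, M.N_eq_sum]
  rw [Finset.sum_Icc_succ_top (by omega : 1 ≤ n + 1)]
  have h1 : ∀ v ∈ Finset.Icc 1 n,
      (if M.D (n + 1) v ω = 1 then (1 : ℝ) else 0)
        = (if M.D n v ω = 1 then (1 : ℝ) else 0)
          - (if M.D n v ω = 1 then (1 : ℝ) else 0)
            * Set.indicator {ω' | M.C n ω' = v} (fun _ => (1 : ℝ)) ω := by
    intro v hv
    rw [Finset.mem_Icc] at hv
    have hd := M.D_pos n v ω hv.1 hv.2
    rw [M.D_succ_old n v ω hv.1 hv.2]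
    by_cases hc : M.C n ω = v
    · have hne : ¬ (M.D n v ω + 1 = 1) := by omega
      simp [Set.indicator_apply, hc, hne]
      omega
    · simp [Set.indicator_apply, hc]
  have h2 : (if M.D (n + 1) (n + 1) ω = 1 then (1 : ℝ) else 0)
      = 1 - Set.indicator {ω' | M.C n ω' = 0} (fun _ => (1 : ℝ)) ω := by
    rw [M.D_succ_new n ω hn]
    by_cases hc : M.C n ω = 0 <;> simp [Set.indicator_apply, hc]
  rw [Finset.sum_congr rfl h1, h2, Finset.sum_sub_distrib]

lemma condexp_N_succ [IsProbabilityMeasure μ] (hδ : -1 < δ) (n : ℕ) (hn : 1 ≤ n) :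
    μ[M.N (n + 1) 1 | M.F n]
      =ᵐ[μ] fun ω => (n * (2 + δ) / (n * (2 + δ) + (1 + δ))) * (M.N n 1 ω + 1) := by
  have h2δ : (0 : ℝ) < 2 + δ := by linarith
  have h1δ : (0 : ℝ) < 1 + δ := by linarith
  have hcn : (0 : ℝ) ≤ (n : ℝ) * (2 + δ) := mul_nonneg (Nat.cast_nonneg n) h2δ.le
  have hc : (0 : ℝ) < (n : ℝ) * (2 + δ) + (1 + δ) := by linarith
  -- notation
  set I : ℕ → Ω → ℝ := fun v => Set.indicator {ω | M.C n ω = v} (fun _ => (1 : ℝ)) with hI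
  set g : ℕ → Ω → ℝ := fun v ω => if M.D n v ω = 1 then (1 : ℝ) else 0 with hg
  have hsetI : ∀ v, MeasurableSet {ω | M.C n ω = v} := fun v =>
    M.F.le (n + 1) _ (M.C_meas n (measurableSet_singleton v))
  have hImeas : ∀ v, Measurable (I v) := fun v => measurable_const.indicator (hsetI v)
  have hIbound : ∀ v ω, |I v ω| ≤ 1 := by
    intro v ω
    rw [hI]
    simp only [Set.indicator_apply]
    split <;> simp
  have hIint : ∀ v, Integrable (I v) μ := fun v =>
    aux_integrable_of_bound (hImeas v).aestronglyMeasurable 1 (hIbound v)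
  have hgmeasF : ∀ v, Measurable[M.F n] (g v) := fun v =>
    Measurable.ite (M.D_meas n v (measurableSet_singleton 1)) measurable_const measurable_const
  have hgmeas : ∀ v, Measurable (g v) := fun v => (hgmeasF v).mono (M.F.le n) le_rfl
  have hgIint : ∀ v, Integrable (g v * I v) μ := by
    intro v
    refine aux_integrable_of_bound ((hgmeas v).mul (hImeas v)).aestronglyMeasurable 1 ?_
    intro ω
    have h1 := hIbound v ω
    have h2 : |g v ω| ≤ 1 := by rw [hg]; simp only; split <;> simp
    calc |(g v * I v) ω| = |g v ω| * |I v ω| := abs_mul _ _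
      _ ≤ 1 * 1 := mul_le_mul h2 h1 (abs_nonneg _) zero_le_one
      _ = 1 := one_mul 1
  set S : Ω → ℝ := fun ω => ∑ v ∈ Finset.Icc 1 n, g v ω * I v ω with hSdef
  have hSint : Integrable S μ := integrable_finset_sum _ fun v _ => hgIint v
  have hTint : Integrable ((fun _ => (1 : ℝ)) - I 0) μ := (integrable_const 1).sub (hIint 0)
  have hNint : Integrable (M.N n 1) μ := M.N_integrable n 1
  have hrec : M.N (n + 1) 1 = (M.N n 1 - S) + ((fun _ => (1 : ℝ)) - I 0) :=
    funext fun ω => M.N_succ_eq n hn ω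
  -- conditional expectation of S
  have hScondexp : μ[S | M.F n] =ᵐ[μ] fun ω => M.N n 1 ω * ((1 + δ) / ((n : ℝ) * (2 + δ) + (1 + δ))) := by
    have e1 : S = ∑ v ∈ Finset.Icc 1 n, (g v * I v) := by
      funext ω; rw [Finset.sum_apply]; rfl
    have hsum : ∀ᵐ ω ∂μ, ∀ v ∈ Finset.Icc 1 n,
        (μ[g v * I v | M.F n]) ω
          = g v ω * (((M.D n v ω : ℝ) + δ) / ((n : ℝ) * (2 + δ) + (1 + δ))) := by
      rw [eventually_all_finset]
      intro v hv
      rw [Finset.mem_Icc] at hv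
      have hmul := condExp_mul_of_stronglyMeasurable_left (μ := μ) (m := M.F n)
        (hgmeasF v).stronglyMeasurable (hgIint v) (hIint v)
      filter_upwards [hmul, M.attach_prob n v hv.1 hv.2] with ω h1 h2
      rw [h1]
      show g v ω * (μ[I v | M.F n]) ω = _
      rw [hI]
      rw [h2]
    calc μ[S | M.F n]
        =ᵐ[μ] ∑ v ∈ Finset.Icc 1 n, μ[g v * I v | M.F n] := by
          rw [e1]; exact condExp_finset_sum (fun v _ => hgIint v) _
      _ =ᵐ[μ] fun ω => M.N n 1 ω * ((1 + δ) / ((n : ℝ) * (2 + δ) + (1 + δ))) := by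
          filter_upwards [hsum] with ω hω
          rw [Finset.sum_apply, Finset.sum_congr rfl hω]
          have hterm : ∀ v ∈ Finset.Icc 1 n,
              g v ω * (((M.D n v ω : ℝ) + δ) / ((n : ℝ) * (2 + δ) + (1 + δ)))
                = (if M.D n v ω = 1 then (1 : ℝ) else 0)
                    * ((1 + δ) / ((n : ℝ) * (2 + δ) + (1 + δ))) := by
            intro v _
            rw [hg]
            by_cases h : M.D n v ω = 1 <;> simp [h]
          rw [Finset.sum_congr rfl hterm, ← Finset.sum_mul, ← M.N_eq_sum]
  have h0 : μ[M.N (n + 1) 1 | M.F n]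
      =ᵐ[μ] μ[(M.N n 1 - S) + ((fun _ => (1 : ℝ)) - I 0) | M.F n] := by rw [hrec]
  have h1 : μ[(M.N n 1 - S) + ((fun _ => (1 : ℝ)) - I 0) | M.F n]
      =ᵐ[μ] μ[M.N n 1 - S | M.F n] + μ[(fun _ => (1 : ℝ)) - I 0 | M.F n] :=
    condExp_add (hNint.sub hSint) hTint _
  have h2 : μ[M.N n 1 - S | M.F n] =ᵐ[μ] μ[M.N n 1 | M.F n] - μ[S | M.F n] :=
    condExp_sub hNint hSint _
  have h3 : μ[(fun _ => (1 : ℝ)) - I 0 | M.F n] =ᵐ[μ] μ[(fun _ => (1 : ℝ)) | M.F n] - μ[I 0 | M.F n] :=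
    condExp_sub (integrable_const 1) (hIint 0) _
  have h4 : μ[M.N n 1 | M.F n] = M.N n 1 :=
    condExp_of_stronglyMeasurable (M.F.le n) (M.N_meas n 1).stronglyMeasurable hNint
  have h5 : μ[(fun _ => (1 : ℝ)) | M.F n] = fun _ => (1 : ℝ) := condExp_const (M.F.le n) 1
  have h6 : μ[I 0 | M.F n] =ᵐ[μ] fun _ => (1 + δ) / ((n : ℝ) * (2 + δ) + (1 + δ)) := by
    rw [hI]; exact M.self_prob n hn
  refine h0.trans (h1.trans ?_)
  filter_upwards [h2, h3, hScondexp, h6] with ω e2 e3 eS e6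
  simp only [Pi.add_apply, Pi.sub_apply] at *
  rw [e2, e3, eS, e6, h4, h5]
  have hcne : ((n : ℝ) * (2 + δ) + (1 + δ)) ≠ 0 := ne_of_gt hc
  field_simp
  ring

lemma integral_N_succ [IsProbabilityMeasure μ] (hδ : -1 < δ) (n : ℕ) (hn : 1 ≤ n) :
    ∫ ω, M.N (n + 1) 1 ω ∂μ
      = (n * (2 + δ) / (n * (2 + δ) + (1 + δ))) * ((∫ ω, M.N n 1 ω ∂μ) + 1) := by
  have h1 := integral_condExp (μ := μ) (f := M.N (n + 1) 1) (M.F.le n)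
  rw [← h1, integral_congr_ae (M.condexp_N_succ hδ n hn)]
  rw [integral_const_mul]
  congr 1
  rw [integral_add (M.N_integrable n 1) (integrable_const 1)]
  simp

end PAModel

/-- In the preferential attachment model, the process
`M_{n+1} = (N_{n+1}(1) − ν_{n+1}) / ∏_{j=1}^n w_j`, `n ≥ 1`, is a martingale with
respect to the filtration `(F_{n+1})`, where `ν_n = E(N_n(1))`, `γ = (1+δ)/(2+δ)`
and `w_j = j/(j+γ)`.  (The Lean index `m` corresponds to `n = m + 1 ≥ 1`.) -/
theorem martingale_N_one {Ω : Type} {mΩ : MeasurableSpace Ω} {μ : Measure Ω}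
    [IsProbabilityMeasure μ] {δ : ℝ} (hδ : -1 < δ) (M : PAModel mΩ μ δ) :
    Martingale
      (fun m ω =>
        (M.N (m + 2) 1 ω - ∫ ω', M.N (m + 2) 1 ω' ∂μ)
          / ∏ j ∈ Finset.Icc 1 (m + 1), ((j : ℝ) / (j + (1 + δ) / (2 + δ))))
      ⟨fun m => M.F (m + 2), fun i j hij => M.F.mono (by omega),
        fun m => M.F.le (m + 2)⟩ μ := by
  have h2δ : (0 : ℝ) < 2 + δ := by linarith
  have h1δ : (0 : ℝ) < 1 + δ := by linarith
  have hγ : (0 : ℝ) < (1 + δ) / (2 + δ) := div_pos h1δ h2δ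
  have hwpos : ∀ j : ℕ, 1 ≤ j → 0 < ((j : ℝ) / (j + (1 + δ) / (2 + δ))) := by
    intro j hj
    have : (0 : ℝ) < j := by exact_mod_cast hj
    exact div_pos this (by linarith)
  have hWpos : ∀ m : ℕ, 0 < ∏ j ∈ Finset.Icc 1 m, ((j : ℝ) / (j + (1 + δ) / (2 + δ))) := by
    intro m
    exact Finset.prod_pos fun j hj => hwpos j (Finset.mem_Icc.mp hj).1
  have hw_eq : ∀ j : ℕ, ((j : ℝ) / (j + (1 + δ) / (2 + δ)))
      = (j : ℝ) * (2 + δ) / ((j : ℝ) * (2 + δ) + (1 + δ)) := by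
    intro j
    have hd1 : (j : ℝ) + (1 + δ) / (2 + δ) ≠ 0 := by positivity
    have hd2 : (j : ℝ) * (2 + δ) + (1 + δ) ≠ 0 := by positivity
    field_simp
  refine martingale_nat ?_ ?_ ?_
  · -- adapted
    intro m
    show StronglyMeasurable[M.F (m + 2)] _
    refine Measurable.stronglyMeasurable ?_
    exact ((M.N_meas (m + 2) 1).sub measurable_const).div_const _
  · -- integrable
    intro m
    exact ((M.N_integrable (m + 2) 1).sub (integrable_const _)).div_const _
  · -- one-step martingale property
    intro i
    have hn : 1 ≤ i + 2 := by omega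
    have hkey := M.condexp_N_succ hδ (i + 2) hn
    have hnu := M.integral_N_succ hδ (i + 2) hn
    set w : ℝ := ((i + 2 : ℕ) : ℝ) * (2 + δ) / (((i + 2 : ℕ) : ℝ) * (2 + δ) + (1 + δ)) with hwdef
    set ν2 : ℝ := ∫ ω', M.N (i + 2) 1 ω' ∂μ with hν2
    set ν3 : ℝ := ∫ ω', M.N (i + 3) 1 ω' ∂μ with hν3
    set W1 : ℝ := ∏ j ∈ Finset.Icc 1 (i + 1), ((j : ℝ) / (j + (1 + δ) / (2 + δ))) with hW1
    set W2 : ℝ := ∏ j ∈ Finset.Icc 1 (i + 2), ((j : ℝ) / (j + (1 + δ) / (2 + δ))) with hW2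
    have hW1pos := hWpos (i + 1)
    have hW2pos := hWpos (i + 2)
    have hwpos' : 0 < w := by
      rw [hwdef, ← hw_eq]
      exact hwpos (i + 2) (by omega)
    have hW2eq : W2 = W1 * w := by
      rw [hW2, hW1, Finset.prod_Icc_succ_top (by omega : 1 ≤ i + 2), hwdef, hw_eq]
    -- rewrite f (i+1)
    have hsplit : (fun ω => (M.N (i + 1 + 2) 1 ω - ∫ ω', M.N (i + 1 + 2) 1 ω' ∂μ)
          / ∏ j ∈ Finset.Icc 1 (i + 1 + 1), ((j : ℝ) / (j + (1 + δ) / (2 + δ))))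
        = W2⁻¹ • (M.N (i + 3) 1 - fun _ => ν3) := by
      funext ω
      show _ = W2⁻¹ * (M.N (i + 3) 1 ω - ν3)
      rw [div_eq_inv_mul]
    have hcond : μ[W2⁻¹ • (M.N (i + 3) 1 - fun _ => ν3) | M.F (i + 2)]
        =ᵐ[μ] fun ω => (M.N (i + 2) 1 ω - ν2) / W1 := by
      have c1 := condExp_smul (μ := μ) (m := M.F (i + 2)) (W2⁻¹) (M.N (i + 3) 1 - fun _ => ν3)
      have c2 : μ[M.N (i + 3) 1 - (fun _ => ν3) | M.F (i + 2)]
          =ᵐ[μ] μ[M.N (i + 3) 1 | M.F (i + 2)] - μ[(fun _ => ν3) | M.F (i + 2)] :=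
        condExp_sub (M.N_integrable (i + 3) 1) (integrable_const _) _
      have c3 : μ[(fun _ => ν3) | M.F (i + 2)] = fun _ => ν3 := condExp_const (M.F.le (i + 2)) ν3
      refine c1.trans ?_
      have c4 : μ[M.N (i + 3) 1 | M.F (i + 2)] =ᵐ[μ] fun ω => w * (M.N (i + 2) 1 ω + 1) := hkey
      filter_upwards [c2, c4] with ω e2 e4
      show W2⁻¹ * (μ[M.N (i + 3) 1 - (fun _ => ν3) | M.F (i + 2)]) ω = _
      rw [e2]
      simp only [Pi.sub_apply]
      rw [e4, c3]
      have hν3eq : ν3 = w * (ν2 + 1) := hnu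
      rw [hν3eq, hW2eq]
      have hW1ne : W1 ≠ 0 := ne_of_gt hW1pos
      have hwne : w ≠ 0 := ne_of_gt hwpos'
      field_simp
      ring
    exact (hsplit ▸ hcond).symm
end

section
/- Fix δ > −1 and k ≥ 1, and define a_n^{(k)} = [∏_{i=k}^{n−1} (1 − (k+δ)/(i(2+δ)+1+δ))]^{−1} for n ≥ k (with a_k^{(k)} = 1). Then a_n^{(k)} = Γ(n + (1+δ)/(2+δ)) Γ(k + (1−k)/(2+δ)) / (Γ(k + (1+δ)/(2+δ)) Γ(n + (1−k)/(2+δ))), and a_n^{(k)} ∼ [Γ(k + (1−k)/(2+δ)) / Γ(k + (1+δ)/(2+δ))] · n^{(k+δ)/(2+δ)} as n → ∞. -/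
open Filter Finset

lemma gamma_prod_Ico {s : ℝ} {k : ℕ} (hs : 0 < (k : ℝ) + s) :
    ∀ n, k ≤ n → Real.Gamma ((n : ℝ) + s)
      = Real.Gamma ((k : ℝ) + s) * ∏ i ∈ Finset.Ico k n, ((i : ℝ) + s) := by
  intro n hn
  induction n, hn using Nat.le_induction with
  | base => simp
  | succ n hn ih =>
    have hns : (0 : ℝ) < (n : ℝ) + s := by
      have : (k : ℝ) ≤ n := Nat.cast_le.mpr hn
      linarith
    have : ((n : ℝ) + 1) + s = ((n : ℝ) + s) + 1 := by ring
    rw [Nat.cast_succ, this, Real.Gamma_add_one hns.ne', ih,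
      Finset.prod_Ico_succ_top hn]
    ring

lemma gammaSeq_ratio {s : ℝ} (hs : 0 < s) :
    Tendsto (fun n : ℕ => (n : ℝ) ^ s * (n.factorial : ℝ) / Real.Gamma ((n : ℝ) + 1 + s)) atTop (nhds 1) := by
  have hG : Real.Gamma s ≠ 0 := (Real.Gamma_pos_of_pos hs).ne'
  have h := (Real.GammaSeq_tendsto_Gamma s).div_const (Real.Gamma s)
  rw [div_self hG] at h
  refine h.congr fun n => ?_
  have hp : ∏ j ∈ Finset.range (n + 1), (s + (j : ℝ))
      = Real.Gamma (((n + 1 : ℕ) : ℝ) + s) / Real.Gamma s := by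
    have := gamma_prod_Ico (k := 0) (s := s) (by simpa using hs) (n + 1) (Nat.zero_le _)
    rw [this]
    rw [Finset.range_eq_Ico] at *
    field_simp
    simp only [Nat.cast_zero, zero_add]
    rw [mul_comm]
    congr 1
    exact Finset.prod_congr rfl fun i _ => by ring
  rw [Real.GammaSeq, hp]
  have hG2 : Real.Gamma (((n + 1 : ℕ) : ℝ) + s) ≠ 0 := by
    refine (Real.Gamma_pos_of_pos ?_).ne'
    positivity
  push_cast
  push_cast at hG2
  rw [div_div_eq_mul_div, div_div]
  rw [mul_comm (Real.Gamma _)]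
  rw [← div_div]
  rw [mul_div_assoc, div_self hG, mul_one]

lemma gamma_ratio_tendsto {s t : ℝ} (hs : 0 < s) (ht : 0 < t) :
    Tendsto (fun m : ℕ =>
      Real.Gamma ((m : ℝ) + 1 + s) / Real.Gamma ((m : ℝ) + 1 + t) / (m : ℝ) ^ (s - t))
      atTop (nhds 1) := by
  have h := (gammaSeq_ratio ht).div (gammaSeq_ratio hs) one_ne_zero
  norm_num at h
  refine h.congr' ?_
  filter_upwards [eventually_ge_atTop 1] with m hm
  have hm0 : (0 : ℝ) < m := by exact_mod_cast hm
  have hGs : 0 < Real.Gamma ((m : ℝ) + 1 + s) := Real.Gamma_pos_of_pos (by positivity)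
  have hGt : 0 < Real.Gamma ((m : ℝ) + 1 + t) := Real.Gamma_pos_of_pos (by positivity)
  have hf : (0 : ℝ) < (m.factorial : ℝ) := by positivity
  have hms : (0 : ℝ) < (m : ℝ) ^ s := Real.rpow_pos_of_pos hm0 s
  have hmt : (0 : ℝ) < (m : ℝ) ^ t := Real.rpow_pos_of_pos hm0 t
  rw [Real.rpow_sub hm0]
  simp only [Pi.div_apply]
  field_simp

lemma prod_ratio_eq {x y : ℝ} {k : ℕ} (hkx : 0 < (k : ℝ) + x) (hky : 0 < (k : ℝ) + y)
    (n : ℕ) (hn : k ≤ n) :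
    (∏ i ∈ Finset.Ico k n, (((i : ℝ) + y) / ((i : ℝ) + x)))⁻¹
      = Real.Gamma ((n : ℝ) + x) * Real.Gamma ((k : ℝ) + y)
        / (Real.Gamma ((k : ℝ) + x) * Real.Gamma ((n : ℝ) + y)) := by
  have hnx : 0 < (n : ℝ) + x := by
    have : (k : ℝ) ≤ n := Nat.cast_le.mpr hn
    linarith
  have hny : 0 < (n : ℝ) + y := by
    have : (k : ℝ) ≤ n := Nat.cast_le.mpr hn
    linarith
  have p1 := gamma_prod_Ico hkx n hn
  have p2 := gamma_prod_Ico hky n hn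
  have GKx := Real.Gamma_pos_of_pos hkx
  have GKy := Real.Gamma_pos_of_pos hky
  have Gnx := Real.Gamma_pos_of_pos hnx
  have Gny := Real.Gamma_pos_of_pos hny
  have e1 : ∏ i ∈ Finset.Ico k n, ((i : ℝ) + x)
      = Real.Gamma ((n : ℝ) + x) / Real.Gamma ((k : ℝ) + x) := by
    rw [p1]; field_simp
  have e2 : ∏ i ∈ Finset.Ico k n, ((i : ℝ) + y)
      = Real.Gamma ((n : ℝ) + y) / Real.Gamma ((k : ℝ) + y) := by
    rw [p2]; field_simp
  rw [Finset.prod_div_distrib, e1, e2, inv_div]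
  field_simp

set_option maxHeartbeats 1000000

/-- `aseq δ k n` is `a_n^{(k)} = [∏_{i=k}^{n−1} (1 − (k+δ)/(i(2+δ)+1+δ))]⁻¹`. -/
noncomputable def aseq (δ : ℝ) (k n : ℕ) : ℝ :=
  (∏ i ∈ Finset.Ico k n, (1 - ((k : ℝ) + δ) / (i * (2 + δ) + 1 + δ)))⁻¹

/-- `a_n^{(k)} = Γ(n+(1+δ)/(2+δ)) Γ(k+(1−k)/(2+δ)) / (Γ(k+(1+δ)/(2+δ)) Γ(n+(1−k)/(2+δ)))`
for `n ≥ k`, and `a_n^{(k)} ∼ [Γ(k+(1−k)/(2+δ))/Γ(k+(1+δ)/(2+δ))] n^{(k+δ)/(2+δ)}`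
as `n → ∞`. -/
theorem aseq_gamma_and_asymp (δ : ℝ) (hδ : -1 < δ) (k : ℕ) (hk : 1 ≤ k) :
    (∀ n : ℕ, k ≤ n →
      aseq δ k n
        = Real.Gamma (n + (1 + δ) / (2 + δ)) * Real.Gamma (k + (1 - (k : ℝ)) / (2 + δ))
          / (Real.Gamma (k + (1 + δ) / (2 + δ)) * Real.Gamma (n + (1 - (k : ℝ)) / (2 + δ)))) ∧
    Tendsto
      (fun n : ℕ =>
        aseq δ k n
          / ((Real.Gamma (k + (1 - (k : ℝ)) / (2 + δ)) / Real.Gamma (k + (1 + δ) / (2 + δ)))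
              * (n : ℝ) ^ (((k : ℝ) + δ) / (2 + δ))))
      atTop (nhds 1) := by
  have h2 : (0 : ℝ) < 2 + δ := by linarith
  have h1 : (0 : ℝ) < 1 + δ := by linarith
  have hk1 : (1 : ℝ) ≤ (k : ℝ) := by exact_mod_cast hk
  have hx : (0 : ℝ) < (1 + δ) / (2 + δ) := div_pos h1 h2
  have hkx : (0 : ℝ) < (k : ℝ) + (1 + δ) / (2 + δ) := by positivity
  have hky : (0 : ℝ) < (k : ℝ) + (1 - (k : ℝ)) / (2 + δ) := by
    rw [show (k : ℝ) + (1 - (k : ℝ)) / (2 + δ) = ((k : ℝ) * (1 + δ) + 1) / (2 + δ) by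
      field_simp; ring]
    apply div_pos _ h2
    nlinarith
  have key : ∀ n : ℕ, k ≤ n →
      aseq δ k n
        = Real.Gamma (n + (1 + δ) / (2 + δ)) * Real.Gamma (k + (1 - (k : ℝ)) / (2 + δ))
          / (Real.Gamma (k + (1 + δ) / (2 + δ)) * Real.Gamma (n + (1 - (k : ℝ)) / (2 + δ))) := by
    intro n hn
    rw [← prod_ratio_eq hkx hky n hn, aseq]
    congr 1
    refine Finset.prod_congr rfl fun i hi => ?_
    have hik : k ≤ i := (Finset.mem_Ico.mp hi).1
    have hik' : (k : ℝ) ≤ (i : ℝ) := Nat.cast_le.mpr hik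
    have hix : (0 : ℝ) < (i : ℝ) + (1 + δ) / (2 + δ) := by linarith
    have hD : (0 : ℝ) < (i : ℝ) * (2 + δ) + 1 + δ := by nlinarith
    field_simp
    ring
  refine ⟨key, ?_⟩
  have hs : (0 : ℝ) < (k : ℝ) + (1 + δ) / (2 + δ) := hkx
  have G2 := (gamma_ratio_tendsto hkx hky).comp (tendsto_sub_atTop_nat (k + 1))
  have hr : Tendsto (fun n : ℕ => ((n - (k + 1) : ℕ) : ℝ) / (n : ℝ)) atTop (nhds 1) := by
    have h0 : Tendsto (fun n : ℕ => 1 - ((k : ℝ) + 1) / (n : ℝ)) atTop (nhds 1) := by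
      have := tendsto_const_div_atTop_nhds_zero_nat ((k : ℝ) + 1)
      simpa using tendsto_const_nhds.sub this
    refine h0.congr' ?_
    filter_upwards [eventually_ge_atTop (k + 1)] with n hn
    have hn0 : (0 : ℝ) < (n : ℝ) := by
      have : 0 < n := lt_of_lt_of_le (Nat.succ_pos k) hn
      exact_mod_cast this
    rw [Nat.cast_sub hn]
    field_simp
    push_cast
    ring
  have R : Tendsto (fun n : ℕ => (((n - (k + 1) : ℕ) : ℝ) / (n : ℝ))
      ^ (((k : ℝ) + (1 + δ) / (2 + δ)) - ((k : ℝ) + (1 - (k : ℝ)) / (2 + δ))))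
      atTop (nhds 1) := by
    have := hr.rpow_const (p := ((k : ℝ) + (1 + δ) / (2 + δ)) - ((k : ℝ) + (1 - (k : ℝ)) / (2 + δ))) (Or.inl one_ne_zero)
    simpa using this
  have main := G2.mul R
  rw [one_mul] at main
  have hαeq : ((k : ℝ) + (1 + δ) / (2 + δ)) - ((k : ℝ) + (1 - (k : ℝ)) / (2 + δ))
      = ((k : ℝ) + δ) / (2 + δ) := by field_simp; ring
  refine main.congr' ?_
  filter_upwards [eventually_ge_atTop (k + 2)] with n hn
  have hnk : k ≤ n := by omega
  have hm1 : 1 ≤ n - (k + 1) := by omega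
  have hmcast : ((n - (k + 1) : ℕ) : ℝ) = (n : ℝ) - ((k : ℝ) + 1) := by
    have : k + 1 ≤ n := by omega
    push_cast [Nat.cast_sub this]
    ring
  have hm0 : (0 : ℝ) < ((n - (k + 1) : ℕ) : ℝ) := by exact_mod_cast hm1
  have hn0 : (0 : ℝ) < (n : ℝ) := lt_of_lt_of_le hm0 (by exact_mod_cast Nat.sub_le n (k + 1))
  have hnx : (0 : ℝ) < (n : ℝ) + (1 + δ) / (2 + δ) := by
    have : (k : ℝ) ≤ n := Nat.cast_le.mpr hnk; linarith
  have hny : (0 : ℝ) < (n : ℝ) + (1 - (k : ℝ)) / (2 + δ) := by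
    have : (k : ℝ) ≤ n := Nat.cast_le.mpr hnk; linarith
  have e1 : ((n - (k + 1) : ℕ) : ℝ) + 1 + ((k : ℝ) + (1 + δ) / (2 + δ))
      = (n : ℝ) + (1 + δ) / (2 + δ) := by rw [hmcast]; ring
  have e2 : ((n - (k + 1) : ℕ) : ℝ) + 1 + ((k : ℝ) + (1 - (k : ℝ)) / (2 + δ))
      = (n : ℝ) + (1 - (k : ℝ)) / (2 + δ) := by rw [hmcast]; ring
  have GKx := Real.Gamma_pos_of_pos hkx
  have GKy := Real.Gamma_pos_of_pos hky
  have Gnx := Real.Gamma_pos_of_pos hnx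
  have Gny := Real.Gamma_pos_of_pos hny
  set α : ℝ := ((k : ℝ) + (1 + δ) / (2 + δ)) - ((k : ℝ) + (1 - (k : ℝ)) / (2 + δ)) with hα
  have hmα : (0 : ℝ) < ((n - (k + 1) : ℕ) : ℝ) ^ α := Real.rpow_pos_of_pos hm0 α
  have hnα : (0 : ℝ) < (n : ℝ) ^ α := Real.rpow_pos_of_pos hn0 α
  simp only [Function.comp_apply, e1, e2]
  rw [key n hnk, Real.div_rpow hm0.le hn0.le, ← hαeq]
  generalize Real.Gamma ((n : ℝ) + (1 + δ) / (2 + δ)) = A at Gnx ⊢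
  generalize Real.Gamma ((n : ℝ) + (1 - (k : ℝ)) / (2 + δ)) = B at Gny ⊢
  generalize Real.Gamma ((k : ℝ) + (1 + δ) / (2 + δ)) = P at GKx ⊢
  generalize Real.Gamma ((k : ℝ) + (1 - (k : ℝ)) / (2 + δ)) = Q at GKy ⊢
  generalize ((n - (k + 1) : ℕ) : ℝ) ^ α = M at hmα ⊢
  generalize (n : ℝ) ^ α = N at hnα ⊢
  field_simp
end

section
/- In the preferential attachment model, for every k ≥ 3 and n ≥ k, almost surely E(N_{n+1}(k) | F_n) = (1 − (k+δ)/(n(2+δ)+(1+δ))) N_n(k) + ((k−1+δ)/(n(2+δ)+(1+δ))) N_n(k−1). -/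
open MeasureTheory ProbabilityTheory Filter Finset

lemma cast_card_filter_eq_sum (s : Finset ℕ) (p : ℕ → Prop) [DecidablePred p] :
    (((s.filter p).card : ℕ) : ℝ) = ∑ v ∈ s, if p v then (1 : ℝ) else 0 := by
  rw [Finset.card_filter, Nat.cast_sum]
  exact Finset.sum_congr rfl fun v _ => by split <;> simp

/-- In the preferential attachment model, for every `k ≥ 3` and `n ≥ k`, almost surely
`E(N_{n+1}(k) | F_n) = (1 − (k+δ)/(n(2+δ)+(1+δ))) N_n(k)
  + ((k−1+δ)/(n(2+δ)+(1+δ))) N_n(k−1)`. -/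
theorem condexp_N_k_succ {Ω : Type} {mΩ : MeasurableSpace Ω} {μ : Measure Ω}
    [IsProbabilityMeasure μ] {δ : ℝ} (hδ : -1 < δ) (M : PAModel mΩ μ δ)
    (k n : ℕ) (hk : 3 ≤ k) (hn : k ≤ n) :
    μ[M.N (n + 1) k | M.F n]
      =ᵐ[μ] fun ω =>
        (1 - ((k : ℝ) + δ) / (n * (2 + δ) + (1 + δ))) * M.N n k ω
          + (((k : ℝ) - 1 + δ) / (n * (2 + δ) + (1 + δ))) * M.N n (k - 1) ω := by
  have hn1 : 1 ≤ n := le_trans (by omega : 1 ≤ k) hn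
  have hFle : M.F n ≤ mΩ := M.F.le n
  set c : ℝ := (n : ℝ) * (2 + δ) + (1 + δ) with hcdef
  set I : ℕ → Ω → ℝ := fun v => Set.indicator {ω | M.C n ω = v} (fun _ => (1 : ℝ)) with hIdef
  set A : ℕ → Ω → ℝ := fun v ω => if M.D n v ω = k then (1 : ℝ) else 0 with hAdef
  set B : ℕ → Ω → ℝ := fun v ω => if M.D n v ω = k - 1 then (1 : ℝ) else 0 with hBdef
  -- measurability facts
  have hCmeas : Measurable (M.C n) := (M.C_meas n).mono (M.F.le (n + 1)) le_rfl
  have hsetC : ∀ v : ℕ, MeasurableSet {ω | M.C n ω = v} := fun v =>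
    hCmeas (measurableSet_singleton v)
  have hAmeasF : ∀ v, Measurable[M.F n] (A v) := fun v =>
    Measurable.ite ((M.D_meas n v) (measurableSet_singleton k)) measurable_const
      measurable_const
  have hBmeasF : ∀ v, Measurable[M.F n] (B v) := fun v =>
    Measurable.ite ((M.D_meas n v) (measurableSet_singleton (k - 1))) measurable_const
      measurable_const
  have hAmeas : ∀ v, Measurable (A v) := fun v => (hAmeasF v).mono hFle le_rfl
  have hBmeas : ∀ v, Measurable (B v) := fun v => (hBmeasF v).mono hFle le_rfl
  have hAbd : ∀ v ω, ‖A v ω‖ ≤ 1 := by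
    intro v ω; by_cases h : M.D n v ω = k <;> simp [hAdef, h]
  have hBbd : ∀ v ω, ‖B v ω‖ ≤ 1 := by
    intro v ω; by_cases h : M.D n v ω = k - 1 <;> simp [hBdef, h]
  -- integrability facts
  have hIint : ∀ v, Integrable (I v) μ := fun v =>
    (integrable_const (1 : ℝ)).indicator (hsetC v)
  have hAint : ∀ v, Integrable (A v) μ := by
    intro v
    have : A v = Set.indicator {ω | M.D n v ω = k} (fun _ => (1 : ℝ)) := by
      funext ω; simp [hAdef, Set.indicator_apply, Set.mem_setOf_eq]
    rw [this]
    exact (integrable_const (1 : ℝ)).indicator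
      (((M.D_meas n v).mono hFle le_rfl) (measurableSet_singleton k))
  have hBint : ∀ v, Integrable (B v) μ := by
    intro v
    have : B v = Set.indicator {ω | M.D n v ω = k - 1} (fun _ => (1 : ℝ)) := by
      funext ω; simp [hBdef, Set.indicator_apply, Set.mem_setOf_eq]
    rw [this]
    exact (integrable_const (1 : ℝ)).indicator
      (((M.D_meas n v).mono hFle le_rfl) (measurableSet_singleton (k - 1)))
  have hAIint : ∀ v, Integrable (A v * I v) μ := fun v =>
    (hIint v).bdd_mul (c := 1) (hAmeas v).aestronglyMeasurable (Eventually.of_forall (hAbd v))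
  have hBIint : ∀ v, Integrable (B v * I v) μ := fun v =>
    (hIint v).bdd_mul (c := 1) (hBmeas v).aestronglyMeasurable (Eventually.of_forall (hBbd v))
  -- conditional expectations of products
  have hmulA : ∀ v, 1 ≤ v → v ≤ n →
      μ[A v * I v | M.F n] =ᵐ[μ] fun ω => A v ω * (((k : ℝ) + δ) / c) := by
    intro v h1 h2
    refine (condExp_mul_of_stronglyMeasurable_left (hAmeasF v).stronglyMeasurable (hAIint v)
      (hIint v)).trans ?_
    filter_upwards [M.attach_prob n v h1 h2] with ω hω
    simp only [Pi.mul_apply, hIdef, hω]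
    by_cases h : M.D n v ω = k
    · simp [hAdef, h, hcdef]
    · simp [hAdef, h]
  have hmulB : ∀ v, 1 ≤ v → v ≤ n →
      μ[B v * I v | M.F n] =ᵐ[μ] fun ω => B v ω * (((k : ℝ) - 1 + δ) / c) := by
    intro v h1 h2
    refine (condExp_mul_of_stronglyMeasurable_left (hBmeasF v).stronglyMeasurable (hBIint v)
      (hIint v)).trans ?_
    filter_upwards [M.attach_prob n v h1 h2] with ω hω
    simp only [Pi.mul_apply, hIdef, hω]
    by_cases h : M.D n v ω = k - 1
    · have hcast : ((M.D n v ω : ℕ) : ℝ) = (k : ℝ) - 1 := by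
        rw [h, Nat.cast_sub (by omega : 1 ≤ k), Nat.cast_one]
      rw [hcast, ← hcdef]
    · simp [hBdef, h]
  -- conditional expectation of each summand
  set G : ℕ → Ω → ℝ := fun v => A v - A v * I v + B v * I v with hGdef
  have hGint : ∀ v, Integrable (G v) μ := fun v =>
    ((hAint v).sub (hAIint v)).add (hBIint v)
  have hGce : ∀ v, 1 ≤ v → v ≤ n →
      μ[G v | M.F n] =ᵐ[μ]
        fun ω => A v ω - A v ω * (((k : ℝ) + δ) / c)
          + B v ω * (((k : ℝ) - 1 + δ) / c) := by
    intro v h1 h2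
    have h3 : μ[G v | M.F n] =ᵐ[μ]
        μ[A v - A v * I v | M.F n] + μ[B v * I v | M.F n] :=
      condExp_add ((hAint v).sub (hAIint v)) (hBIint v) _
    have h4 : μ[A v - A v * I v | M.F n] =ᵐ[μ] μ[A v | M.F n] - μ[A v * I v | M.F n] :=
      condExp_sub (hAint v) (hAIint v) _
    have h5 : μ[A v | M.F n] = A v :=
      condExp_of_stronglyMeasurable hFle (hAmeasF v).stronglyMeasurable (hAint v)
    filter_upwards [h3, h4, hmulA v h1 h2, hmulB v h1 h2] with ω hω3 hω4 hωA hωB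
    simp only [Pi.add_apply, Pi.sub_apply] at *
    rw [hω3, hω4, h5, hωA, hωB]
  -- the decomposition of N (n+1) k
  have hNfun : M.N (n + 1) k = ∑ v ∈ Finset.Icc 1 n, G v := by
    funext ω
    have h1 : M.N (n + 1) k ω
        = ∑ v ∈ Finset.Icc 1 (n + 1), (if M.D (n + 1) v ω = k then (1 : ℝ) else 0) := by
      simp only [PAModel.N]
      exact cast_card_filter_eq_sum _ _
    have hlast : M.D (n + 1) (n + 1) ω ≠ k := by
      rw [M.D_succ_new n ω hn1]; split_ifs <;> omega
    rw [h1, Finset.sum_Icc_succ_top (by omega : 1 ≤ n + 1), if_neg hlast, add_zero]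
    rw [Finset.sum_apply]
    refine Finset.sum_congr rfl fun v hv => ?_
    obtain ⟨hv1, hv2⟩ := Finset.mem_Icc.mp hv
    rw [M.D_succ_old n v ω hv1 hv2]
    by_cases hC : M.C n ω = v
    · simp only [hGdef, Pi.add_apply, Pi.sub_apply, Pi.mul_apply, hIdef, hAdef, hBdef,
        Set.indicator_apply, Set.mem_setOf_eq, hC, eq_self_iff_true, if_true, mul_one]
      rw [sub_self, zero_add]
      exact if_congr (by omega) rfl rfl
    · simp only [hGdef, Pi.add_apply, Pi.sub_apply, Pi.mul_apply, hIdef, hAdef, hBdef,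
        Set.indicator_apply, Set.mem_setOf_eq, hC, if_false, mul_zero, sub_zero,
        add_zero]
  -- sums of A and B give N
  have hsumA : ∀ ω, ∑ v ∈ Finset.Icc 1 n, A v ω = M.N n k ω := by
    intro ω
    simp only [PAModel.N, hAdef]
    exact (cast_card_filter_eq_sum _ _).symm
  have hsumB : ∀ ω, ∑ v ∈ Finset.Icc 1 n, B v ω = M.N n (k - 1) ω := by
    intro ω
    simp only [PAModel.N, hBdef]
    exact (cast_card_filter_eq_sum _ _).symm
  -- put everything together
  calc μ[M.N (n + 1) k | M.F n]
      = μ[∑ v ∈ Finset.Icc 1 n, G v | M.F n] := by rw [hNfun]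
    _ =ᵐ[μ] ∑ v ∈ Finset.Icc 1 n, μ[G v | M.F n] :=
        condExp_finsetSum (fun v _ => hGint v) _
    _ =ᵐ[μ] ∑ v ∈ Finset.Icc 1 n,
        (fun ω => A v ω - A v ω * (((k : ℝ) + δ) / c)
          + B v ω * (((k : ℝ) - 1 + δ) / c)) := by
        refine eventuallyEq_sum fun v hv => ?_
        obtain ⟨hv1, hv2⟩ := Finset.mem_Icc.mp hv
        exact hGce v hv1 hv2
    _ =ᵐ[μ] fun ω =>
        (1 - ((k : ℝ) + δ) / (n * (2 + δ) + (1 + δ))) * M.N n k ω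
          + (((k : ℝ) - 1 + δ) / (n * (2 + δ) + (1 + δ))) * M.N n (k - 1) ω := by
        refine Filter.EventuallyEq.of_eq ?_
        funext ω
        rw [Finset.sum_apply]
        simp only [Finset.sum_add_distrib, Finset.sum_sub_distrib, ← Finset.sum_mul,
          hsumA, hsumB]
        rw [← hcdef]
        ring
end

section
/- Fix δ > −1 and k ≥ 1. Let C_k be the k×k lower triangular matrix with entries c_{i,j} = b_j^{(i)} for j ≤ i and c_{i,j} = 0 for j > i, and let D_k be the k×k lower triangular matrix with entries d_{i,j} = (−1)^{i−j} b_j^{(i)} for j ≤ i and d_{i,j} = 0 for j > i. Then C_k is invertible and D_k = C_k^{−1}. -/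
open Finset Matrix

/-- `bcoef δ k j` is `b_j^{(k)} = (−1)^{k−j} Γ(k+δ)/((k−j)! Γ(j+δ))` for `j ≤ k`,
with the convention `b_j^{(k)} = 0` for `j > k`. -/
noncomputable def bcoef (δ : ℝ) (k j : ℕ) : ℝ :=
  if j ≤ k then
    (-1 : ℝ) ^ (k - j) * Real.Gamma (k + δ) / ((Nat.factorial (k - j)) * Real.Gamma (j + δ))
  else 0

/-- `pk δ k` is the limiting degree frequency
`p_k = c(δ) Γ(k+δ)/Γ(k+3+2δ)` with `c(δ) = (2+δ)Γ(3+2δ)/Γ(1+δ)`, and `p_0 = 0`. -/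
noncomputable def pk (δ : ℝ) (k : ℕ) : ℝ :=
  if k = 0 then 0
  else (2 + δ) * Real.Gamma (3 + 2 * δ) / Real.Gamma (1 + δ)
    * Real.Gamma (k + δ) / Real.Gamma (k + 3 + 2 * δ)


lemma gamma_ne (δ : ℝ) (hδ : -1 < δ) (m : ℕ) : Real.Gamma ((m:ℝ) + 1 + δ) ≠ 0 := by
  have : (0:ℝ) < (m:ℝ) + 1 + δ := by
    have : (0:ℝ) ≤ (m:ℝ) := Nat.cast_nonneg m
    linarith
  exact (Real.Gamma_pos_of_pos this).ne'

lemma key_sum (δ : ℝ) (hδ : -1 < δ) (i l : ℕ) (hli : l ≤ i) :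
    ∑ j ∈ Finset.Icc l i,
      ((-1 : ℝ) ^ (i - j) * Real.Gamma ((i:ℝ) + 1 + δ) /
        ((Nat.factorial (i - j)) * Real.Gamma ((j:ℝ) + 1 + δ)) *
      (Real.Gamma ((j:ℝ) + 1 + δ) /
        ((Nat.factorial (j - l)) * Real.Gamma ((l:ℝ) + 1 + δ))))
      = if i = l then 1 else 0 := by
  set n := i - l with hn
  have hil : i = l + n := by omega
  -- rewrite each summand
  have hterm : ∀ j ∈ Finset.Icc l i,
      ((-1 : ℝ) ^ (i - j) * Real.Gamma ((i:ℝ) + 1 + δ) /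
        ((Nat.factorial (i - j)) * Real.Gamma ((j:ℝ) + 1 + δ)) *
      (Real.Gamma ((j:ℝ) + 1 + δ) /
        ((Nat.factorial (j - l)) * Real.Gamma ((l:ℝ) + 1 + δ))))
      = Real.Gamma ((i:ℝ) + 1 + δ) / ((Nat.factorial n) * Real.Gamma ((l:ℝ) + 1 + δ))
        * ((-1 : ℝ) ^ (i - j) * (n.choose (j - l))) := by
    intro j hj
    simp only [Finset.mem_Icc] at hj
    have h1 : j - l ≤ n := by omega
    have h2 : n - (j - l) = i - j := by omega
    rw [Nat.cast_choose ℝ h1, h2]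
    have hg1 := gamma_ne δ hδ j
    have hg2 := gamma_ne δ hδ l
    have hf1 : ((i - j).factorial : ℝ) ≠ 0 := Nat.cast_ne_zero.mpr (Nat.factorial_ne_zero _)
    have hf2 : ((j - l).factorial : ℝ) ≠ 0 := Nat.cast_ne_zero.mpr (Nat.factorial_ne_zero _)
    have hf3 : ((n).factorial : ℝ) ≠ 0 := Nat.cast_ne_zero.mpr (Nat.factorial_ne_zero _)
    field_simp
  rw [Finset.sum_congr rfl hterm, ← Finset.mul_sum]
  have hsum : ∑ j ∈ Finset.Icc l i, ((-1 : ℝ) ^ (i - j) * (n.choose (j - l)))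
      = if n = 0 then 1 else 0 := by
    rw [← Finset.Ico_add_one_right_eq_Icc, Finset.sum_Ico_eq_sum_range]
    have hr : i + 1 - l = n + 1 := by omega
    rw [hr]
    have : ∀ m ∈ Finset.range (n + 1),
        ((-1 : ℝ) ^ (i - (l + m)) * ((n.choose (l + m - l)) : ℝ))
        = (-1 : ℝ) ^ n * ((-1 : ℝ) ^ m * ((n.choose m) : ℝ)) := by
      intro m hm
      simp only [Finset.mem_range] at hm
      have h3 : i - (l + m) = n - m := by omega
      have h4 : l + m - l = m := by omega
      rw [h3, h4]
      have hmn : m ≤ n := by omega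
      have : (-1 : ℝ) ^ (n - m) * (-1 : ℝ) ^ m = (-1 : ℝ) ^ n := by
        rw [← pow_add]; congr 1; omega
      have h5 : (-1 : ℝ) ^ (n - m) = (-1 : ℝ) ^ n * (-1 : ℝ) ^ m := by
        have hsq : ((-1 : ℝ) ^ m) * ((-1 : ℝ) ^ m) = 1 := by
          rw [← pow_add, ← two_mul, pow_mul]; norm_num
        calc (-1 : ℝ) ^ (n - m) = (-1 : ℝ) ^ (n - m) * (((-1 : ℝ) ^ m) * ((-1 : ℝ) ^ m)) := by
              rw [hsq, mul_one]
          _ = ((-1 : ℝ) ^ (n - m) * (-1 : ℝ) ^ m) * (-1 : ℝ) ^ m := by ring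
          _ = (-1 : ℝ) ^ n * (-1 : ℝ) ^ m := by rw [this]
      rw [h5]; ring
    rw [Finset.sum_congr rfl this, ← Finset.mul_sum]
    have halt : ∑ m ∈ Finset.range (n + 1), ((-1 : ℝ) ^ m * ((n.choose m) : ℝ))
        = if n = 0 then 1 else 0 := by
      have := Int.alternating_sum_range_choose (n := n)
      have := congrArg (fun z : ℤ => (z : ℝ)) this
      push_cast at this
      convert this using 2 <;> simp
    rw [halt]
    rcases Nat.eq_zero_or_pos n with h | h
    · simp [h]
    · simp [Nat.pos_iff_ne_zero.mp h]
  rw [hsum]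
  rcases Nat.eq_zero_or_pos n with h | h
  · have hil' : i = l := by omega
    subst hil'
    simp only [h, Nat.factorial_zero, Nat.cast_one, one_mul, if_true]
    simp only [if_pos rfl, mul_one]
    exact div_self (gamma_ne δ hδ i)
  · have : i ≠ l := by omega
    simp [this, Nat.pos_iff_ne_zero.mp h]

lemma CD_eq_one (δ : ℝ) (hδ : -1 < δ) (k : ℕ) :
    (Matrix.of fun i j : Fin k =>
        if (j : ℕ) ≤ (i : ℕ) then bcoef δ ((i : ℕ) + 1) ((j : ℕ) + 1) else 0) *
    (Matrix.of fun i j : Fin k =>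
        if (j : ℕ) ≤ (i : ℕ) then
          (-1 : ℝ) ^ ((i : ℕ) - (j : ℕ)) * bcoef δ ((i : ℕ) + 1) ((j : ℕ) + 1)
        else 0) = 1 := by
  ext i l
  rw [Matrix.mul_apply, Matrix.one_apply]
  simp only [Matrix.of_apply]
  have hstep : ∀ j : Fin k,
      (if (j : ℕ) ≤ (i : ℕ) then bcoef δ ((i : ℕ) + 1) ((j : ℕ) + 1) else 0) *
      (if (l : ℕ) ≤ (j : ℕ) then
          (-1 : ℝ) ^ ((j : ℕ) - (l : ℕ)) * bcoef δ ((j : ℕ) + 1) ((l : ℕ) + 1) else 0)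
      = if (l : ℕ) ≤ (j : ℕ) ∧ (j : ℕ) ≤ (i : ℕ) then
          ((-1 : ℝ) ^ ((i : ℕ) - (j : ℕ)) * Real.Gamma (((i : ℕ) : ℝ) + 1 + δ) /
            ((Nat.factorial ((i : ℕ) - (j : ℕ))) * Real.Gamma (((j : ℕ) : ℝ) + 1 + δ)) *
          (Real.Gamma (((j : ℕ) : ℝ) + 1 + δ) /
            ((Nat.factorial ((j : ℕ) - (l : ℕ))) * Real.Gamma (((l : ℕ) : ℝ) + 1 + δ))))
        else 0 := by
    intro j
    by_cases h1 : (j : ℕ) ≤ (i : ℕ) <;> by_cases h2 : (l : ℕ) ≤ (j : ℕ)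
    · rw [if_pos h1, if_pos h2, if_pos ⟨h2, h1⟩]
      rw [bcoef, bcoef, if_pos (by omega : (j:ℕ) + 1 ≤ (i:ℕ) + 1),
        if_pos (by omega : (l:ℕ) + 1 ≤ (j:ℕ) + 1)]
      have e1 : (i:ℕ) + 1 - ((j:ℕ) + 1) = (i:ℕ) - (j:ℕ) := by omega
      have e2 : (j:ℕ) + 1 - ((l:ℕ) + 1) = (j:ℕ) - (l:ℕ) := by omega
      rw [e1, e2]
      push_cast
      have hsq : (-1 : ℝ) ^ ((j:ℕ) - (l:ℕ)) * (-1 : ℝ) ^ ((j:ℕ) - (l:ℕ)) = 1 := by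
        rw [← pow_add, ← two_mul, pow_mul]; norm_num
      ring_nf
      ring_nf at hsq
      rw [hsq]
      ring
    · rw [if_neg h2, mul_zero, if_neg (by tauto)]
    · rw [if_neg h1, zero_mul, if_neg (by tauto)]
    · rw [if_neg h1, zero_mul, if_neg (by tauto)]
  rw [Finset.sum_congr rfl (fun j _ => hstep j)]
  rw [Fin.sum_univ_eq_sum_range (fun j => if (l : ℕ) ≤ j ∧ j ≤ (i : ℕ) then
      ((-1 : ℝ) ^ ((i : ℕ) - j) * Real.Gamma (((i : ℕ) : ℝ) + 1 + δ) /
        ((Nat.factorial ((i : ℕ) - j)) * Real.Gamma ((j : ℝ) + 1 + δ)) *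
      (Real.Gamma ((j : ℝ) + 1 + δ) /
        ((Nat.factorial (j - (l : ℕ))) * Real.Gamma (((l : ℕ) : ℝ) + 1 + δ))))
      else 0) k]
  by_cases hli : (l : ℕ) ≤ (i : ℕ)
  · have hsub : Finset.Icc (l : ℕ) (i : ℕ) ⊆ Finset.range k := by
      intro x hx
      simp only [Finset.mem_Icc] at hx
      simp only [Finset.mem_range]
      exact lt_of_le_of_lt hx.2 i.isLt
    rw [← Finset.sum_subset hsub (by
      intro x _ hx
      simp only [Finset.mem_Icc] at hx
      rw [if_neg (by tauto)])]
    have : ∀ j ∈ Finset.Icc (l : ℕ) (i : ℕ),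
        (if (l : ℕ) ≤ j ∧ j ≤ (i : ℕ) then
          ((-1 : ℝ) ^ ((i : ℕ) - j) * Real.Gamma (((i : ℕ) : ℝ) + 1 + δ) /
            ((Nat.factorial ((i : ℕ) - j)) * Real.Gamma ((j : ℝ) + 1 + δ)) *
          (Real.Gamma ((j : ℝ) + 1 + δ) /
            ((Nat.factorial (j - (l : ℕ))) * Real.Gamma (((l : ℕ) : ℝ) + 1 + δ))))
          else 0)
        = ((-1 : ℝ) ^ ((i : ℕ) - j) * Real.Gamma (((i : ℕ) : ℝ) + 1 + δ) /
            ((Nat.factorial ((i : ℕ) - j)) * Real.Gamma ((j : ℝ) + 1 + δ)) *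
          (Real.Gamma ((j : ℝ) + 1 + δ) /
            ((Nat.factorial (j - (l : ℕ))) * Real.Gamma (((l : ℕ) : ℝ) + 1 + δ)))) := by
      intro j hj
      simp only [Finset.mem_Icc] at hj
      exact if_pos hj
    rw [Finset.sum_congr rfl this, key_sum δ hδ (i : ℕ) (l : ℕ) hli]
    by_cases h : i = l
    · simp [h]
    · rw [if_neg h, if_neg (fun hc => h (Fin.ext hc))]
  · have hne : i ≠ l := fun h => hli (le_of_eq (congrArg Fin.val h.symm))
    rw [if_neg hne]
    apply Finset.sum_eq_zero
    intro j hj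
    rw [if_neg (by omega)]

/-- The `k×k` lower triangular matrix `C_k` with entries `c_{i,j} = b_j^{(i)}` for
`j ≤ i` (and `0` above the diagonal; rows/columns are indexed by `1,…,k`) is
invertible, and its inverse is the lower triangular matrix `D_k` with entries
`d_{i,j} = (−1)^{i−j} b_j^{(i)}` for `j ≤ i`. -/
theorem bcoef_matrix_inverse (δ : ℝ) (hδ : -1 < δ) (k : ℕ) (hk : 1 ≤ k) :
    IsUnit (Matrix.of fun i j : Fin k =>
        if (j : ℕ) ≤ (i : ℕ) then bcoef δ ((i : ℕ) + 1) ((j : ℕ) + 1) else 0) ∧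
    (Matrix.of fun i j : Fin k =>
        if (j : ℕ) ≤ (i : ℕ) then bcoef δ ((i : ℕ) + 1) ((j : ℕ) + 1) else 0)⁻¹
      = Matrix.of fun i j : Fin k =>
          if (j : ℕ) ≤ (i : ℕ) then
            (-1 : ℝ) ^ ((i : ℕ) - (j : ℕ)) * bcoef δ ((i : ℕ) + 1) ((j : ℕ) + 1)
          else 0 := by
  have hCD := CD_eq_one δ hδ k
  haveI := invertibleOfRightInverse _ _ hCD
  exact ⟨isUnit_of_invertible _, Matrix.inv_eq_right_inv hCD⟩
end
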